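/- Let k ≥ 2 be an integer, Γ ⊆ ℤ^k a finite set, and σ_1,…,σ_k linear orders on ℤ with induced product partial order σ. Then H(Γ_σ) does not lie in the open interval (0, ξ_k); that is, either H(Γ_σ) = 0 or H(Γ_σ) ≥ ξ_k = log(k/(k−1)^{(k−1)/k}). -/

import Mathlib

open scoped BigOperators
open Classical

noncomputable section

namespace SlicePaper

/-- Shannon entropy of the `i`-th coordinate marginal of a distribution `p` on `Δ`. -/
def margEnt {ι : Type*} [Fintype ι] (Δ : Finset (ι → ℤ)) (p : (ι → ℤ) → ℝ) (i : ι) : ℝ :=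
  -∑ α ∈ Δ.image (fun γ => γ i),
      (∑ γ ∈ Δ.filter (fun γ => γ i = α), p γ) *
        Real.log (∑ γ ∈ Δ.filter (fun γ => γ i = α), p γ)

/-- The entropy `H(Δ)` of a finite set of integer tuples. -/
def HSet {ι : Type*} [Fintype ι] (Δ : Finset (ι → ℤ)) : ℝ :=
  sSup {e : ℝ | ∃ p : (ι → ℤ) → ℝ, (∀ γ, 0 ≤ p γ) ∧ (∀ γ, p γ ≠ 0 → γ ∈ Δ) ∧
    (∑ γ ∈ Δ, p γ) = 1 ∧ e = ⨅ i, margEnt Δ p i}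

/-- Maximal elements of `Δ` w.r.t. the product of the linear orders `σ i`. -/
def maxElems {ι : Type*} [Fintype ι] (σ : ι → LinearOrder ℤ) (Δ : Finset (ι → ℤ)) :
    Finset (ι → ℤ) :=
  Δ.filter (fun γ => ∀ δ ∈ Δ, (∀ i, (σ i).le (γ i) (δ i)) → γ = δ)

/-- `ξ k = log (k / (k-1)^((k-1)/k))`. -/
def xi (k : ℕ) : ℝ :=
  Real.log ((k : ℝ) / ((k : ℝ) - 1) ^ (((k : ℝ) - 1) / (k : ℝ)))

/-- Slice rank of a coefficient array `c`. -/
def sliceRank {k : ℕ} (F : Type*) [Field F] (τ : Fin k → Type*) [∀ i, Fintype (τ i)]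
    (c : (∀ i, τ i) → F) : ℕ :=
  sInf {r : ℕ | ∃ j : Fin r → Fin k, ∃ a : ∀ l : Fin r, τ (j l) → F,
    ∃ b : ∀ l : Fin r, (((i : {i : Fin k // i ≠ j l}) → τ i.1) → F),
    ∀ s : ∀ i, τ i, c s = ∑ l : Fin r, a l (s (j l)) * b l (fun i => s i.1)}

/-- `n`-th tensor power of a coefficient array. -/
def tpow {k : ℕ} {F : Type*} [Field F] {τ : Fin k → Type*} (c : (∀ i, τ i) → F) (n : ℕ) :
    (∀ i, Fin n → τ i) → F :=
  fun u => ∏ m : Fin n, c (fun i => u i m)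

/-- Support of a coefficient array, as a finite set of integer tuples. -/
def support {k : ℕ} {F : Type*} [Field F] (S : Fin k → Finset ℤ)
    (c : (∀ i, {x : ℤ // x ∈ S i}) → F) : Finset (Fin k → ℤ) :=
  (Finset.univ.filter (fun s : ∀ i, {x : ℤ // x ∈ S i} => c s ≠ 0)).image
    (fun s i => (s i : ℤ))

/-- Section `Γ_I^x`: restrictions to coordinates outside `I` of the γ ∈ Γ agreeing with x on I. -/
def sect {k : ℕ} (Γ : Finset (Fin k → ℤ)) (I : Finset (Fin k)) (x : Fin k → ℤ) :
    Finset ({i : Fin k // i ∉ I} → ℤ) :=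
  (Γ.filter (fun γ => ∀ i ∈ I, γ i = x i)).image (fun γ i => γ i.1)

/-- Section along a single coordinate. -/
def sect1 {k : ℕ} (Γ : Finset (Fin k → ℤ)) (i : Fin k) (a : ℤ) :
    Finset ({j : Fin k // j ≠ i} → ℤ) :=
  (Γ.filter (fun γ => γ i = a)).image (fun γ j => γ j.1)

/-- Trifferent set of strings. -/
def trifferent {n : ℕ} {α : Type*} (A : Finset (Fin n → α)) : Prop :=
  ∀ x ∈ A, ∀ y ∈ A, ∀ z ∈ A, x ≠ y → y ≠ z → x ≠ z →
    ∃ i, x i ≠ y i ∧ y i ≠ z i ∧ x i ≠ z i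

/-- The cube root of unity `ω = e^{2πi/3}`. -/
def w : ℂ := Complex.exp (2 * Real.pi * Complex.I / 3)

/-- The tensor `f_{x,y}(z,t)` used for the trifference problem. -/
def f {n : ℕ} (x y z t : Fin n → ℂ) : ℂ :=
  ∏ i, (x i + y i + z i) * (x i + y i + t i)

/-- Monomial functions `g_{α,β}`. -/
def g {n : ℕ} (α β : Fin n → ℕ) : (Fin n → ℂ) × (Fin n → ℂ) → ℂ :=
  fun q => ∏ i, (q.1 i + q.2 i) ^ α i * (q.1 i * q.2 i) ^ β i



/-! ### Auxiliary lemmas for `stmt1` -/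

lemma aux_neg_mul_log_le_one {s : ℝ} (hs : 0 ≤ s) : -(s * Real.log s) ≤ 1 := by
  rcases eq_or_lt_of_le hs with h | h
  · simp [← h]
  · have h1 : Real.log s⁻¹ ≤ s⁻¹ - 1 := Real.log_le_sub_one_of_pos (by positivity)
    rw [Real.log_inv] at h1
    have h2 : s * s⁻¹ = 1 := mul_inv_cancel₀ h.ne'
    nlinarith

lemma aux_neg_mul_log_mono {s u : ℝ} (hs : 0 ≤ s) (hsu : s ≤ u) (hu : 0 < u) :
    -(s * Real.log u) ≤ -(s * Real.log s) := by
  rcases eq_or_lt_of_le hs with h | h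
  · simp [← h]
  · have := Real.log_le_log h hsu
    nlinarith

lemma aux_xi_eq {k : ℕ} (hk : 2 ≤ k) :
    xi k = Real.log k - ((k : ℝ) - 1) / k * Real.log ((k : ℝ) - 1) := by
  have hk2 : (2 : ℝ) ≤ (k : ℝ) := by exact_mod_cast hk
  have hb : (0 : ℝ) < (k : ℝ) - 1 := by linarith
  unfold xi
  rw [Real.log_div (by positivity) (Real.rpow_pos_of_pos hb _).ne', Real.log_rpow hb]

lemma aux_F_endpoint1 {k : ℕ} (hk : 2 ≤ k) :
    -((1 / (k : ℝ)) * Real.log (1 / (k : ℝ))) -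
      (1 - 1 / (k : ℝ)) * Real.log (1 - 1 / (k : ℝ)) = xi k := by
  have hk2 : (2 : ℝ) ≤ (k : ℝ) := by exact_mod_cast hk
  have hk0 : (k : ℝ) ≠ 0 := by linarith
  have hb : (0 : ℝ) < (k : ℝ) - 1 := by linarith
  have h1 : Real.log (1 / (k : ℝ)) = -Real.log k := by
    rw [one_div, Real.log_inv]
  have h2 : (1 : ℝ) - 1 / (k : ℝ) = ((k : ℝ) - 1) / k := by field_simp
  have h3 : Real.log (((k : ℝ) - 1) / k) = Real.log ((k : ℝ) - 1) - Real.log k :=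
    Real.log_div hb.ne' hk0
  rw [h1, h2, h3, aux_xi_eq hk]
  field_simp
  ring

lemma aux_F_endpoint2 {k : ℕ} (hk : 2 ≤ k) :
    -((((k : ℝ) - 1) / k) * Real.log (((k : ℝ) - 1) / k)) -
      (1 - ((k : ℝ) - 1) / k) * Real.log (1 - ((k : ℝ) - 1) / k) = xi k := by
  have hk2 : (2 : ℝ) ≤ (k : ℝ) := by exact_mod_cast hk
  have hk0 : (k : ℝ) ≠ 0 := by linarith
  have hb : (0 : ℝ) < (k : ℝ) - 1 := by linarith
  have h2 : (1 : ℝ) - ((k : ℝ) - 1) / k = 1 / k := by field_simp; ring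
  have h1 : Real.log (1 / (k : ℝ)) = -Real.log k := by rw [one_div, Real.log_inv]
  have h3 : Real.log (((k : ℝ) - 1) / k) = Real.log ((k : ℝ) - 1) - Real.log k :=
    Real.log_div hb.ne' hk0
  rw [h2, h1, h3, aux_xi_eq hk]
  field_simp
  ring

lemma aux_F_concave_pair {x y a b : ℝ} (hx0 : 0 ≤ x) (hx1 : x ≤ 1) (hy0 : 0 ≤ y) (hy1 : y ≤ 1)
    (ha : 0 ≤ a) (hb : 0 ≤ b) (hab : a + b = 1) :
    a * (-(x * Real.log x) - (1 - x) * Real.log (1 - x)) +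
      b * (-(y * Real.log y) - (1 - y) * Real.log (1 - y)) ≤
    -((a * x + b * y) * Real.log (a * x + b * y)) -
      (1 - (a * x + b * y)) * Real.log (1 - (a * x + b * y)) := by
  have c := Real.convexOn_mul_log
  have h1 := c.2 (Set.mem_Ici.2 hx0) (Set.mem_Ici.2 hy0) ha hb hab
  have h2 := c.2 (Set.mem_Ici.2 (by linarith : (0:ℝ) ≤ 1 - x))
    (Set.mem_Ici.2 (by linarith : (0:ℝ) ≤ 1 - y)) ha hb hab
  simp only [smul_eq_mul] at h1 h2
  have key : a * (1 - x) + b * (1 - y) = 1 - (a * x + b * y) := by linarith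
  rw [key] at h2
  nlinarith [h1, h2]

lemma aux_F_ge_xi {k : ℕ} (hk : 2 ≤ k) {t : ℝ} (h1 : 1 / (k : ℝ) ≤ t)
    (h2 : t ≤ ((k : ℝ) - 1) / k) :
    xi k ≤ -(t * Real.log t) - (1 - t) * Real.log (1 - t) := by
  have hk2 : (2 : ℝ) ≤ (k : ℝ) := by exact_mod_cast hk
  have hk0 : (k : ℝ) ≠ 0 := by linarith
  rcases eq_or_lt_of_le hk with hk2' | hk3
  · have hkk : (k : ℝ) = 2 := by exact_mod_cast hk2'.symm
    have hxy : ((k : ℝ) - 1) / k = 1 / k := by rw [hkk]; norm_num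
    have ht : t = 1 / (k : ℝ) := le_antisymm (hxy ▸ h2) h1
    rw [ht, aux_F_endpoint1 hk]
  · have hk3R : (3 : ℝ) ≤ (k : ℝ) := by exact_mod_cast hk3
    have hd : (0 : ℝ) < (k : ℝ) - 2 := by linarith
    set x : ℝ := 1 / (k : ℝ) with hxdef
    set y : ℝ := ((k : ℝ) - 1) / k with hydef
    set a : ℝ := (y - t) * ((k : ℝ) / ((k : ℝ) - 2)) with hadef
    set b : ℝ := (t - x) * ((k : ℝ) / ((k : ℝ) - 2)) with hbdef
    have ha : 0 ≤ a := mul_nonneg (by linarith) (by positivity)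
    have hb : 0 ≤ b := mul_nonneg (by linarith) (by positivity)
    have hab : a + b = 1 := by
      rw [hadef, hbdef, hxdef, hydef]; field_simp; ring
    have hcombo : a * x + b * y = t := by
      rw [hadef, hbdef, hxdef, hydef]; field_simp; ring
    have hx0 : 0 ≤ x := by positivity
    have hx1 : x ≤ 1 := by rw [hxdef]; rw [div_le_one (by linarith)]; linarith
    have hy0 : 0 ≤ y := by rw [hydef]; apply div_nonneg <;> linarith
    have hy1 : y ≤ 1 := by rw [hydef]; rw [div_le_one (by linarith)]; linarith
    have hcc := aux_F_concave_pair hx0 hx1 hy0 hy1 ha hb hab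
    rw [hcombo] at hcc
    calc xi k = a * xi k + b * xi k := by
          rw [← add_mul, hab, one_mul]
      _ = a * (-(x * Real.log x) - (1 - x) * Real.log (1 - x)) +
            b * (-(y * Real.log y) - (1 - y) * Real.log (1 - y)) := by
          rw [hxdef, hydef, aux_F_endpoint1 hk, aux_F_endpoint2 hk]
      _ ≤ _ := hcc

lemma aux_exists_small_B {k : ℕ} (hk : 2 ≤ k) (Δ : Finset (Fin k → ℤ))
    (h : ∀ i, ∃ γ ∈ Δ, ∃ δ ∈ Δ, γ i ≠ δ i) :
    ∃ B : Finset (Fin k → ℤ), B ⊆ Δ ∧ 2 ≤ B.card ∧ B.card ≤ k ∧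
      ∀ i, ∃ γ ∈ B, ∃ δ ∈ B, γ i ≠ δ i := by
  classical
  set P : Finset (Fin k → ℤ) → Prop := fun B => ∀ i, ∃ γ ∈ B, ∃ δ ∈ B, γ i ≠ δ i with hP
  have hS : (Δ.powerset.filter P).Nonempty := by
    refine ⟨Δ, ?_⟩
    rw [Finset.mem_filter, Finset.mem_powerset]
    exact ⟨Finset.Subset.refl _, h⟩
  obtain ⟨B, hBmem, hBmin⟩ := Finset.exists_min_image _ Finset.card hS
  rw [Finset.mem_filter, Finset.mem_powerset] at hBmem
  obtain ⟨hBΔ, hBP⟩ := hBmem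
  have i0 : Fin k := ⟨0, by omega⟩
  have h2 : 2 ≤ B.card := by
    obtain ⟨γ, hγ, δ, hδ, hne⟩ := hBP i0
    exact Finset.one_lt_card.2 ⟨γ, hγ, δ, hδ, fun hxy => hne (by rw [hxy])⟩
  refine ⟨B, hBΔ, h2, ?_, hBP⟩
  by_contra hbig
  push_neg at hbig
  have h3 : 3 ≤ B.card := by omega
  have key : ∀ β ∈ B, ∃ i : Fin k, ∀ γ ∈ B.erase β, ∀ δ ∈ B.erase β, γ i = δ i := by
    intro β hβ
    by_contra hcon
    push_neg at hcon
    have hPe : P (B.erase β) := fun i => hcon i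
    have hmem : B.erase β ∈ Δ.powerset.filter P := by
      rw [Finset.mem_filter, Finset.mem_powerset]
      exact ⟨(Finset.erase_subset _ _).trans hBΔ, hPe⟩
    have := hBmin _ hmem
    rw [Finset.card_erase_of_mem hβ] at this
    omega
  choose I hI using key
  set J : (Fin k → ℤ) → Fin k := fun β => if hb : β ∈ B then I β hb else i0 with hJ
  have hinj : Set.InjOn J (B : Set (Fin k → ℤ)) := by
    intro β hβs β' hβs' heq
    by_contra hne
    have hβ : β ∈ B := Finset.mem_coe.1 hβs
    have hβ' : β' ∈ B := Finset.mem_coe.1 hβs'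
    simp only [hJ] at heq
    rw [dif_pos hβ, dif_pos hβ'] at heq
    set i := I β hβ with hi
    have hIb := hI β hβ
    have hIb' := hI β' hβ'
    rw [← heq] at hIb'
    have hcard : 1 ≤ ((B.erase β).erase β').card := by
      rw [Finset.card_erase_of_mem (Finset.mem_erase.2 ⟨fun hx => hne hx.symm, hβ'⟩),
        Finset.card_erase_of_mem hβ]
      omega
    obtain ⟨γ₂, hγ₂⟩ :=
      Finset.card_pos.1 (show 0 < ((B.erase β).erase β').card by omega)
    have hγ₂b' : γ₂ ∈ B.erase β := (Finset.mem_of_mem_erase hγ₂)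
    have hγ₂ne' : γ₂ ≠ β' := (Finset.mem_erase.1 hγ₂).1
    have hγ₂ne : γ₂ ≠ β := (Finset.mem_erase.1 hγ₂b').1
    have hγ₂B : γ₂ ∈ B := Finset.mem_of_mem_erase hγ₂b'
    have hconst : ∀ δ ∈ B, δ i = γ₂ i := by
      intro δ hδ
      by_cases hδβ : δ = β
      · subst hδβ
        exact hIb' _ (Finset.mem_erase.2 ⟨hne, hδ⟩) _ (Finset.mem_erase.2 ⟨hγ₂ne', hγ₂B⟩)
      · exact hIb _ (Finset.mem_erase.2 ⟨hδβ, hδ⟩) _ (Finset.mem_erase.2 ⟨hγ₂ne, hγ₂B⟩)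
    obtain ⟨γ, hγ, δ, hδ, hgd⟩ := hBP i
    exact hgd ((hconst γ hγ).trans (hconst δ hδ).symm)
  have := Finset.card_le_card_of_injOn J (fun a _ => Finset.mem_univ (J a)) hinj
  simp only [Finset.card_univ, Fintype.card_fin] at this
  omega

lemma aux_spread_of_margEnt_pos {ι : Type*} [Fintype ι] (Δ : Finset (ι → ℤ))
    (p : (ι → ℤ) → ℝ) (hsum : (∑ γ ∈ Δ, p γ) = 1) (i : ι)
    (hpos : 0 < margEnt Δ p i) :
    ∃ γ ∈ Δ, ∃ δ ∈ Δ, γ i ≠ δ i := by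
  by_contra hcon
  push_neg at hcon
  rcases Finset.eq_empty_or_nonempty Δ with h | ⟨γ₀, hγ₀⟩
  · rw [h] at hsum; simp at hsum
  · have himg : Δ.image (fun γ => γ i) = {γ₀ i} := by
      apply Finset.Subset.antisymm
      · intro α hα
        obtain ⟨γ, hγ, rfl⟩ := Finset.mem_image.1 hα
        simp [hcon γ hγ γ₀ hγ₀]
      · simp only [Finset.singleton_subset_iff]
        exact Finset.mem_image_of_mem _ hγ₀
    have hfil : Δ.filter (fun γ => γ i = γ₀ i) = Δ :=
      Finset.filter_true_of_mem (fun γ hγ => hcon γ hγ γ₀ hγ₀)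
    unfold margEnt at hpos
    rw [himg, Finset.sum_singleton, hfil, hsum] at hpos
    simp at hpos

lemma aux_sum_indicator_eq {k : ℕ} (Δ B : Finset (Fin k → ℤ)) (hBΔ : B ⊆ Δ) (c : ℝ)
    {Q : (Fin k → ℤ) → Prop} [DecidablePred Q] :
    (∑ γ ∈ Δ.filter Q, if γ ∈ B then c else 0) = ((B.filter Q).card : ℝ) * c := by
  rw [Finset.sum_ite_mem]
  have : Δ.filter Q ∩ B = B.filter Q := by
    ext γ
    simp only [Finset.mem_inter, Finset.mem_filter]
    exact ⟨fun h => ⟨h.2, h.1.2⟩, fun h => ⟨⟨hBΔ h.1, h.2⟩, h.1⟩⟩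
  rw [this, Finset.sum_const, nsmul_eq_mul]

lemma aux_margEnt_lower {k : ℕ} (hk : 2 ≤ k) (Δ B : Finset (Fin k → ℤ)) (hBΔ : B ⊆ Δ)
    (h2 : 2 ≤ B.card) (hkc : B.card ≤ k) (i : Fin k)
    (hsp : ∃ γ ∈ B, ∃ δ ∈ B, γ i ≠ δ i) :
    xi k ≤ margEnt Δ (fun γ => if γ ∈ B then ((B.card : ℝ))⁻¹ else 0) i := by
  classical
  set p : (Fin k → ℤ) → ℝ := fun γ => if γ ∈ B then ((B.card : ℝ))⁻¹ else 0 with hpdef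
  set m : ℝ := (B.card : ℝ) with hmdef
  have hm2 : (2 : ℝ) ≤ m := by rw [hmdef]; exact_mod_cast h2
  have hm0 : m ≠ 0 := by linarith
  have hmpos : (0 : ℝ) < m := by linarith
  have hkR : (2 : ℝ) ≤ (k : ℝ) := by exact_mod_cast hk
  have hkpos : (0 : ℝ) < (k : ℝ) := by linarith
  have hmk : m ≤ (k : ℝ) := by rw [hmdef]; exact_mod_cast hkc
  set s : ℤ → ℝ := fun α => ∑ γ ∈ Δ.filter (fun γ => γ i = α), p γ with hsdef
  have hs_eq : ∀ α, s α = ((B.filter (fun γ => γ i = α)).card : ℝ) * m⁻¹ := by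
    intro α
    rw [hsdef]
    exact aux_sum_indicator_eq Δ B hBΔ _
  have hs_nonneg : ∀ α, 0 ≤ s α := by
    intro α
    apply Finset.sum_nonneg
    intro γ _
    show (0:ℝ) ≤ if γ ∈ B then m⁻¹ else 0
    by_cases h : γ ∈ B
    · rw [if_pos h, hmdef]; exact inv_nonneg.2 (Nat.cast_nonneg _)
    · rw [if_neg h]
  have htot0 : (∑ γ ∈ Δ, p γ) = 1 := by
    rw [hpdef]
    rw [Finset.sum_ite_mem, Finset.inter_eq_right.2 hBΔ, Finset.sum_const,
      nsmul_eq_mul, ← hmdef, mul_inv_cancel₀ hm0]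
  have htot : ∑ α ∈ Δ.image (fun γ => γ i), s α = 1 := by
    rw [hsdef]
    rw [Finset.sum_fiberwise_of_maps_to (fun γ hγ => Finset.mem_image_of_mem _ hγ) p]
    exact htot0
  obtain ⟨γ₀, hγ₀, δ₀, hδ₀, hne⟩ := hsp
  set α₀ : ℤ := γ₀ i with hα₀
  have hα₀Im : α₀ ∈ Δ.image (fun γ => γ i) := Finset.mem_image_of_mem _ (hBΔ hγ₀)
  set c : ℕ := (B.filter (fun γ => γ i = α₀)).card with hcdef
  have hc1 : 1 ≤ c := Finset.card_pos.2 ⟨γ₀, Finset.mem_filter.2 ⟨hγ₀, rfl⟩⟩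
  have hclt : c < B.card := by
    apply Finset.card_lt_card
    rw [Finset.ssubset_iff_of_subset (Finset.filter_subset _ _)]
    exact ⟨δ₀, hδ₀, fun hmem => hne ((Finset.mem_filter.1 hmem).2).symm⟩
  set t : ℝ := s α₀ with htdef
  have ht_eq : t = (c : ℝ) * m⁻¹ := by rw [htdef, hs_eq]
  have hcR : (1 : ℝ) ≤ (c : ℝ) := by exact_mod_cast hc1
  have hcltR : (c : ℝ) ≤ m - 1 := by
    rw [hmdef]
    have : (c : ℝ) + 1 ≤ (B.card : ℝ) := by exact_mod_cast hclt
    linarith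
  have ht1 : 1 / (k : ℝ) ≤ t := by
    rw [ht_eq, ← div_eq_mul_inv, div_le_div_iff₀ hkpos hmpos]
    nlinarith
  have ht2 : t ≤ ((k : ℝ) - 1) / k := by
    rw [ht_eq, ← div_eq_mul_inv, div_le_div_iff₀ hmpos hkpos]
    nlinarith
  have ht_lt1 : t < 1 := by
    have : ((k : ℝ) - 1) / k < 1 := by rw [div_lt_one hkpos]; linarith
    linarith
  have h1t_pos : (0 : ℝ) < 1 - t := by linarith
  have hmarg : margEnt Δ p i = ∑ α ∈ Δ.image (fun γ => γ i), -(s α * Real.log (s α)) := by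
    unfold margEnt
    rw [← Finset.sum_neg_distrib]
  rw [hmarg]
  rw [← Finset.sum_erase_add _ _ hα₀Im]
  have hrest : ∑ α ∈ (Δ.image (fun γ => γ i)).erase α₀, s α = 1 - t := by
    have := Finset.sum_erase_add (Δ.image (fun γ => γ i)) s hα₀Im
    rw [htot] at this
    linarith [this]
  have hbound : -((1 - t) * Real.log (1 - t)) ≤
      ∑ α ∈ (Δ.image (fun γ => γ i)).erase α₀, -(s α * Real.log (s α)) := by
    have hsum2 : ∑ α ∈ (Δ.image (fun γ => γ i)).erase α₀, -(s α * Real.log (1 - t))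
        = -((1 - t) * Real.log (1 - t)) := by
      rw [Finset.sum_neg_distrib, ← Finset.sum_mul, hrest]
    calc -((1 - t) * Real.log (1 - t))
        = ∑ α ∈ (Δ.image (fun γ => γ i)).erase α₀, -(s α * Real.log (1 - t)) := hsum2.symm
      _ ≤ _ := by
          apply Finset.sum_le_sum
          intro α hα
          apply aux_neg_mul_log_mono (hs_nonneg α) ?_ h1t_pos
          rw [← hrest]
          exact Finset.single_le_sum (fun β _ => hs_nonneg β) hα
  have hfin := aux_F_ge_xi hk ht1 ht2
  have hsplit : -(t * Real.log t) - (1 - t) * Real.log (1 - t) ≤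
      (∑ α ∈ (Δ.image (fun γ => γ i)).erase α₀, -(s α * Real.log (s α))) +
        -(s α₀ * Real.log (s α₀)) := by
    rw [← htdef]
    linarith
  linarith


/-- for any finite `Γ ⊆ ℤ^k` and any product of linear orders `σ`,
`H(Γ_σ)` does not lie in the open interval `(0, ξ k)`. -/
theorem stmt1 {k : ℕ} (hk : 2 ≤ k) (Γ : Finset (Fin k → ℤ))
    (σ : Fin k → LinearOrder ℤ) :
    HSet (maxElems σ Γ) ∉ Set.Ioo 0 (xi k) := by
  intro hIoo
  obtain ⟨hpos, hlt⟩ := hIoo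
  haveI : Nonempty (Fin k) := ⟨⟨0, by omega⟩⟩
  set Δ := maxElems σ Γ with hΔdef
  set S : Set ℝ := {e : ℝ | ∃ p : (Fin k → ℤ) → ℝ, (∀ γ, 0 ≤ p γ) ∧
    (∀ γ, p γ ≠ 0 → γ ∈ Δ) ∧ (∑ γ ∈ Δ, p γ) = 1 ∧ e = ⨅ i, margEnt Δ p i} with hSdef
  have hH : HSet Δ = sSup S := rfl
  have hbdd : BddAbove S := by
    refine ⟨(Δ.card : ℝ), ?_⟩
    rintro e ⟨p, hp0, -, -, rfl⟩
    have i0 : Fin k := ⟨0, by omega⟩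
    have h1 : (⨅ i, margEnt Δ p i) ≤ margEnt Δ p i0 :=
      ciInf_le (Set.Finite.bddBelow (Set.finite_range _)) i0
    have h2 : margEnt Δ p i0 ≤ ((Δ.image (fun γ => γ i0)).card : ℝ) := by
      unfold margEnt
      rw [← Finset.sum_neg_distrib]
      have hterm : ∀ α ∈ Δ.image (fun γ => γ i0),
          -((∑ γ ∈ Δ.filter (fun γ => γ i0 = α), p γ) *
            Real.log (∑ γ ∈ Δ.filter (fun γ => γ i0 = α), p γ)) ≤ 1 :=
        fun α _ => aux_neg_mul_log_le_one (Finset.sum_nonneg fun γ _ => hp0 γ)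
      calc _ ≤ ∑ _α ∈ Δ.image (fun γ => γ i0), (1:ℝ) := Finset.sum_le_sum hterm
        _ = _ := by rw [Finset.sum_const, nsmul_eq_mul, mul_one]
    have h3 : ((Δ.image (fun γ => γ i0)).card : ℝ) ≤ (Δ.card : ℝ) := by
      exact_mod_cast Finset.card_image_le
    exact le_trans h1 (le_trans h2 h3)
  have hex : ∃ e ∈ S, 0 < e := by
    by_contra hcon
    push_neg at hcon
    have : HSet Δ ≤ 0 := by rw [hH]; exact Real.sSup_le hcon le_rfl
    linarith
  obtain ⟨e, he, hepos⟩ := hex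
  obtain ⟨p, hp0, hpsupp, hpsum, rfl⟩ := he
  have hspread : ∀ i, ∃ γ ∈ Δ, ∃ δ ∈ Δ, γ i ≠ δ i := by
    intro i
    refine aux_spread_of_margEnt_pos Δ p hpsum i ?_
    exact lt_of_lt_of_le hepos (ciInf_le (Set.Finite.bddBelow (Set.finite_range _)) i)
  obtain ⟨B, hBΔ, h2B, hkc, hBsp⟩ := aux_exists_small_B hk Δ hspread
  set q : (Fin k → ℤ) → ℝ := fun γ => if γ ∈ B then ((B.card : ℝ))⁻¹ else 0 with hqdef
  have hq0 : ∀ γ, 0 ≤ q γ := by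
    intro γ
    show (0:ℝ) ≤ if γ ∈ B then ((B.card : ℝ))⁻¹ else 0
    by_cases h : γ ∈ B
    · rw [if_pos h]; exact inv_nonneg.2 (Nat.cast_nonneg _)
    · rw [if_neg h]
  have hqsupp : ∀ γ, q γ ≠ 0 → γ ∈ Δ := by
    intro γ hγ
    by_contra hnot
    apply hγ
    show (if γ ∈ B then ((B.card : ℝ))⁻¹ else 0) = 0
    rw [if_neg (fun hB => hnot (hBΔ hB))]
  have hm0 : ((B.card : ℝ)) ≠ 0 := by
    have : (2:ℝ) ≤ (B.card : ℝ) := by exact_mod_cast h2B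
    linarith
  have hqsum : (∑ γ ∈ Δ, q γ) = 1 := by
    show (∑ γ ∈ Δ, if γ ∈ B then ((B.card : ℝ))⁻¹ else 0) = 1
    rw [Finset.sum_ite_mem, Finset.inter_eq_right.2 hBΔ, Finset.sum_const,
      nsmul_eq_mul, mul_inv_cancel₀ hm0]
  have hmemS : (⨅ i, margEnt Δ q i) ∈ S := ⟨q, hq0, hqsupp, hqsum, rfl⟩
  have hge : xi k ≤ ⨅ i, margEnt Δ q i :=
    le_ciInf fun i => aux_margEnt_lower hk Δ B hBΔ h2B hkc i (hBsp i)
  have hfin : xi k ≤ HSet Δ := by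
    rw [hH]
    exact le_trans hge (le_csSup hbdd hmemS)
  linarith


end SlicePaper
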